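/- If ε is symmetrically distributed about 0 with continuous strictly increasing distribution function F and finite mean, then the function g(τ) := E[ρ_τ(ε − F⁻¹(τ))] is symmetric about τ = 1/2, i.e., g(τ) = g(1−τ) for all τ ∈ (0,1). -/

import Mathlib

open MeasureTheory

/-- The check function of quantile regression: ρ_τ(u) = u(τ − 1{u<0}). -/
noncomputable def check (τ u : ℝ) : ℝ := u * (τ - if u < 0 then 1 else 0)

lemma check_neg_eq (τ u : ℝ) : check (1 - τ) (-u) = check τ u := by
  unfold check
  rcases lt_trichotomy u 0 with h | h | h
  · rw [if_pos h, if_neg (not_lt.mpr (by linarith))]; ring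
  · simp [h]
  · rw [if_pos (show -u < 0 by linarith), if_neg (not_lt.mpr h.le)]; ring

lemma check_measurable (τ c : ℝ) : Measurable (fun x : ℝ => check τ (x - c)) := by
  unfold check
  exact (measurable_id.sub_const c).mul <| measurable_const.sub <|
    Measurable.ite (measurableSet_lt (measurable_id.sub_const c) measurable_const)
      measurable_const measurable_const

/-- If ε is symmetrically distributed about 0 with continuous strictly increasing
distribution function F and finite mean, then g(τ) = E[ρ_τ(ε − F⁻¹(τ))] satisfies
g(τ) = g(1−τ) for all τ ∈ (0,1). -/
theorem expected_SRAR_symmetric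
    {Ω : Type*} [MeasurableSpace Ω] (μ : Measure Ω) [IsProbabilityMeasure μ]
    (ε : Ω → ℝ) (hε : Measurable ε) (hint : Integrable ε μ)
    (hsym : Measure.map ε μ = Measure.map (fun ω => -ε ω) μ)
    (F Finv : ℝ → ℝ)
    (hF : ∀ x, F x = (μ {ω | ε ω ≤ x}).toReal)
    (hFcont : Continuous F) (hFmono : StrictMono F)
    (hFinv : ∀ τ ∈ Set.Ioo (0:ℝ) 1, Finv τ = sInf {x | τ ≤ F x})
    (g : ℝ → ℝ)
    (hg : ∀ τ, g τ = ∫ ω, check τ (ε ω - Finv τ) ∂μ) :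
    ∀ τ ∈ Set.Ioo (0:ℝ) 1, g τ = g (1 - τ) := by
  set ν : Measure ℝ := Measure.map ε μ with hν
  have hνprob : IsProbabilityMeasure ν := Measure.isProbabilityMeasure_map hε.aemeasurable
  -- F in terms of ν
  have hFν : ∀ x, F x = (ν (Set.Iic x)).toReal := by
    intro x
    rw [hF x, hν, Measure.map_apply hε measurableSet_Iic]
    rfl
  -- no atoms
  have hatom : ∀ x : ℝ, ν {x} = 0 := by
    intro x
    have hbound : ∀ a < x, (ν {x}).toReal ≤ F x - F a := by
      intro a ha
      have hsplit : ν (Set.Iic a) + ν (Set.Ioc a x) = ν (Set.Iic x) := by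
        rw [← measure_union (Set.Iic_disjoint_Ioc le_rfl) measurableSet_Ioc,
          Set.Iic_union_Ioc_eq_Iic ha.le]
      have h1 : ν {x} ≤ ν (Set.Ioc a x) :=
        measure_mono (by simp [Set.mem_Ioc, ha])
      have h2 : (ν (Set.Ioc a x)).toReal = F x - F a := by
        rw [hFν, hFν]
        have := congrArg ENNReal.toReal hsplit
        rw [ENNReal.toReal_add (measure_ne_top _ _) (measure_ne_top _ _)] at this
        linarith
      calc (ν {x}).toReal ≤ (ν (Set.Ioc a x)).toReal :=
            ENNReal.toReal_mono (measure_ne_top _ _) h1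
        _ = F x - F a := h2
    have htend : Filter.Tendsto (fun a => F x - F a) (nhdsWithin x (Set.Iio x))
        (nhds 0) := by
      have : Filter.Tendsto (fun a => F x - F a) (nhds x) (nhds (F x - F x)) :=
        tendsto_const_nhds.sub (hFcont.tendsto x)
      simpa using this.mono_left nhdsWithin_le_nhds
    have hle : (ν {x}).toReal ≤ 0 := by
      refine ge_of_tendsto htend ?_
      filter_upwards [self_mem_nhdsWithin] with a ha
      exact hbound a ha
    have h0 : (ν {x}).toReal = 0 :=
      le_antisymm hle ENNReal.toReal_nonneg
    exact (ENNReal.toReal_eq_zero_iff _).mp h0 |>.resolve_right (measure_ne_top _ _)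
  have hIio : ∀ x : ℝ, ν (Set.Iio x) = ν (Set.Iic x) := by
    intro x
    refine le_antisymm (measure_mono Set.Iio_subset_Iic_self) ?_
    calc ν (Set.Iic x) ≤ ν (Set.Iio x ∪ {x}) := by
          apply measure_mono; intro y hy
          rcases lt_or_eq_of_le (Set.mem_Iic.mp hy) with h | h
          · exact Or.inl h
          · exact Or.inr h
      _ ≤ ν (Set.Iio x) + ν {x} := measure_union_le _ _
      _ = ν (Set.Iio x) := by rw [hatom, add_zero]
  -- symmetry of F
  have hFsym : ∀ x : ℝ, F (-x) = 1 - F x := by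
    intro x
    have h1 : ν (Set.Iic (-x)) = ν (Set.Ici x) := by
      conv_lhs => rw [hsym]
      rw [Measure.map_apply (f := fun ω => -ε ω) hε.neg measurableSet_Iic, hν,
        Measure.map_apply hε measurableSet_Ici]
      congr 1
      ext ω
      simp
    have h2 : ν (Set.Iio x) + ν (Set.Ici x) = 1 := by
      rw [← measure_union (Set.Iio_disjoint_Ici le_rfl) measurableSet_Ici,
        Set.Iio_union_Ici, measure_univ]
    have h3 := congrArg ENNReal.toReal h2
    rw [ENNReal.toReal_add (measure_ne_top _ _) (measure_ne_top _ _)] at h3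
    simp only [ENNReal.toReal_one] at h3
    rw [hFν, h1, hFν x, ← hIio x]
    linarith
  -- Finv characterization
  have hInvChar : ∀ τ ∈ Set.Ioo (0:ℝ) 1, ∀ x₀, F x₀ = τ → Finv τ = x₀ := by
    intro τ hτ x₀ hx₀
    rw [hFinv τ hτ]
    have : {x | τ ≤ F x} = Set.Ici x₀ := by
      ext x
      simp only [Set.mem_setOf_eq, Set.mem_Ici, ← hx₀]
      exact hFmono.le_iff_le
    rw [this, csInf_Ici]
  -- existence of quantile
  have hexists : ∀ τ ∈ Set.Ioo (0:ℝ) 1, ∃ x₀, F x₀ = τ := by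
    intro τ hτ
    have htendTop : Filter.Tendsto F Filter.atTop (nhds 1) := by
      have h := tendsto_measure_Iic_atTop ν
      rw [measure_univ] at h
      have h2 : Filter.Tendsto (fun x => (ν (Set.Iic x)).toReal) Filter.atTop
          (nhds (1 : ENNReal).toReal) :=
        (ENNReal.tendsto_toReal ENNReal.one_ne_top).comp h
      simp only [ENNReal.toReal_one] at h2
      convert h2 using 1
      ext x; exact hFν x
    -- b with τ < F b and (1 - τ) < F b
    have hb : ∀ᶠ b in Filter.atTop, max τ (1 - τ) < F b := by
      have : max τ (1 - τ) < 1 := max_lt hτ.2 (by linarith [hτ.1])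
      exact htendTop.eventually (eventually_gt_nhds this)
    obtain ⟨b, hbτ⟩ := hb.exists
    have hFb : τ < F b := lt_of_le_of_lt (le_max_left _ _) hbτ
    have hFnb : F (-b) < τ := by
      have := hFsym b
      have h2 : 1 - τ < F b := lt_of_le_of_lt (le_max_right _ _) hbτ
      linarith
    have hab : -b ≤ b := by
      by_contra h
      push_neg at h
      exact absurd (hFmono h) (by linarith)
    have hmem : τ ∈ Set.Icc (F (-b)) (F b) := ⟨hFnb.le, hFb.le⟩
    obtain ⟨x₀, _, hx₀⟩ := intermediate_value_Icc hab hFcont.continuousOn hmem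
    exact ⟨x₀, hx₀⟩
  -- main proof
  intro τ hτ
  obtain ⟨x₀, hx₀⟩ := hexists τ hτ
  have hτ' : (1 - τ) ∈ Set.Ioo (0:ℝ) 1 := ⟨by linarith [hτ.2], by linarith [hτ.1]⟩
  have hFinvτ : Finv τ = x₀ := hInvChar τ hτ x₀ hx₀
  have hFinvτ' : Finv (1 - τ) = -x₀ := by
    refine hInvChar (1 - τ) hτ' (-x₀) ?_
    rw [hFsym, hx₀]
  rw [hg τ, hg (1 - τ), hFinvτ, hFinvτ']
  have hpt : ∀ ω, check (1 - τ) (ε ω - -x₀) = check τ (-ε ω - x₀) := by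
    intro ω
    have : ε ω - -x₀ = -(-ε ω - x₀) := by ring
    rw [this, check_neg_eq]
  simp only [hpt]
  have hmf : Measurable (fun x : ℝ => check τ (x - x₀)) := check_measurable τ x₀
  have h1 : ∫ ω, check τ (ε ω - x₀) ∂μ = ∫ x, check τ (x - x₀) ∂ν :=
    (integral_map hε.aemeasurable hmf.aestronglyMeasurable).symm
  have h2 : ∫ ω, check τ (-ε ω - x₀) ∂μ
      = ∫ x, check τ (x - x₀) ∂(Measure.map (fun ω => -ε ω) μ) :=
    (integral_map hε.neg.aemeasurable hmf.aestronglyMeasurable).symm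
  rw [h1, h2, ← hsym]
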